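/- Let P and Q be binary-input DMCs with finite output alphabets whose conditional output distributions P_0, P_1 and Q_0, Q_1 each have a common support point, and suppose the functions s ↦ d_C(P_0,P_1,s) and s ↦ d_C(Q_0,Q_1,s) on [0,1] are non-constant. Define E_s = min( max(d_C(P_0,P_1,s), d_C(P_0,P_1,1−s)), max(d_C(Q_0,Q_1,s), d_C(Q_0,Q_1,1−s)) ), E* = max_{0≤s≤1} E_s, and let s* ∈ [0,1/2] be a maximizer of E_s satisfying d_C(P_0,P_1,s*) ≥ d_C(P_0,P_1,1−s*) and d_C(Q_0,Q_1,s*) ≥ d_C(Q_0,Q_1,1−s*). Then at least one of the following holds: (i) E* = max_{0≤s≤1} d_C(P_0,P_1,s); (ii) E* = max_{0≤s≤1} d_C(Q_0,Q_1,s); (iii) E* = d_C(P_0,P_1,s*) = d_C(Q_0,Q_1,s*), s* ≠ 0, and the functions s ↦ d_C(P_0,P_1,s) and s ↦ d_C(Q_0,Q_1,s) are of strictly opposite type with respect to s*. -/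

import Mathlib

open scoped BigOperators
open Finset

noncomputable section

/-- A probability mass function on a finite type, given as a real-valued function. -/
def IsPMF {α : Type*} [Fintype α] (p : α → ℝ) : Prop :=
  (∀ x, 0 ≤ p x) ∧ ∑ x, p x = 1

/-- A discrete memoryless channel: every input symbol yields a PMF on outputs. -/
def IsChannel {X Y : Type*} [Fintype Y] (P : X → Y → ℝ) : Prop :=
  ∀ x, IsPMF (P x)

/-- The Chernoff sum `Σ_x p(x)^{1-s} q(x)^s`, with terms where `p` or `q` vanish removed;
this realizes the continuous extension to the endpoints `s ∈ {0,1}`. -/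
def cherSum {α : Type*} [Fintype α] (p q : α → ℝ) (s : ℝ) : ℝ :=
  ∑ x, if p x = 0 ∨ q x = 0 then 0 else p x ^ (1 - s) * q x ^ s

/-- The Chernoff divergence `d_C(p, q, s)`. -/
def dC {α : Type*} [Fintype α] (p q : α → ℝ) (s : ℝ) : ℝ :=
  - Real.log (cherSum p q s)

/-- First derivative of the Chernoff divergence with respect to `s`. -/
def dC' {α : Type*} [Fintype α] (p q : α → ℝ) (s : ℝ) : ℝ :=
  deriv (dC p q) s

/-- Second derivative of the Chernoff divergence with respect to `s`. -/
def dC'' {α : Type*} [Fintype α] (p q : α → ℝ) (s : ℝ) : ℝ :=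
  deriv (deriv (dC p q)) s

/-- The tilted distribution `Q_s`. -/
def tilted {α : Type*} [Fintype α] (p q : α → ℝ) (s : ℝ) (x : α) : ℝ :=
  (if p x = 0 ∨ q x = 0 then 0 else p x ^ (1 - s) * q x ^ s) / cherSum p q s

/-- Kullback–Leibler divergence (natural log), with the convention `0 log 0 = 0`. -/
def KLdiv {α : Type*} [Fintype α] (p q : α → ℝ) : ℝ :=
  ∑ x, if p x = 0 then 0 else p x * Real.log (p x / q x)

/-- Product (memoryless) output distribution of a channel given an input string. -/
def prodDist {X Y : Type*} [Fintype Y] {n : ℕ} (P : X → Y → ℝ) (w : Fin n → X) :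
    (Fin n → Y) → ℝ :=
  fun y => ∏ i, P (w i) (y i)

/-- Two distributions have a common support point. -/
def CommonSupport {α : Type*} (p q : α → ℝ) : Prop :=
  ∃ x, p x ≠ 0 ∧ q x ≠ 0

/-- `pmin` is the smallest nonzero transition probability of the channel `Q`. -/
def MinTransChan {X Y : Type*} (Q : X → Y → ℝ) (pmin : ℝ) : Prop :=
  0 < pmin ∧ (∃ x y, Q x y = pmin) ∧ ∀ x y, Q x y ≠ 0 → pmin ≤ Q x y

/-- `pmin` is the smallest nonzero transition probability among the channels `P` and `Q`. -/
def MinTransPair {Y Z : Type*} (P : Bool → Y → ℝ) (Q : Bool → Z → ℝ) (pmin : ℝ) : Prop :=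
  0 < pmin ∧ ((∃ b y, P b y = pmin) ∨ (∃ b z, Q b z = pmin)) ∧
    (∀ b y, P b y ≠ 0 → pmin ≤ P b y) ∧ ∀ b z, Q b z ≠ 0 → pmin ≤ Q b z

/-- `pmin` is the smallest nonzero probability among the values of two distributions. -/
def MinProbPair {α : Type*} (p q : α → ℝ) (pmin : ℝ) : Prop :=
  0 < pmin ∧ ((∃ x, p x = pmin) ∨ (∃ x, q x = pmin)) ∧
    (∀ x, p x ≠ 0 → pmin ≤ p x) ∧ ∀ x, q x ≠ 0 → pmin ≤ q x

/-- A deterministic `n`-step 2-hop protocol: codewords `x false = x⃗₀`, `x true = x⃗₁`,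
relay maps (the `i`-th transmission may depend only on the previously received symbols),
and a decoder. -/
structure DetProtocol (Y Z : Type*) (n : ℕ) where
  x : Bool → Fin n → Bool
  relay : (i : Fin n) → (Fin i → Y) → Bool
  dec : (Fin n → Z) → Bool

/-- The relay transmissions `W_1, …, W_n` determined by the received sequence `y`. -/
def DetProtocol.W {Y Z : Type*} {n : ℕ} (π : DetProtocol Y Z n) (y : Fin n → Y)
    (i : Fin n) : Bool :=
  π.relay i (fun j => y (Fin.castLE i.isLt.le j))

/-- `errProb P Q π b` is the conditional error probability `ℙ(Θ̂ = ¬b ∣ Θ = b)`. -/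
def errProb {Y Z : Type*} [Fintype Y] [Fintype Z] {n : ℕ}
    (P : Bool → Y → ℝ) (Q : Bool → Z → ℝ) (π : DetProtocol Y Z n) (b : Bool) : ℝ :=
  ∑ y : Fin n → Y, ∑ z : Fin n → Z,
    prodDist P (π.x b) y * prodDist Q (π.W y) z *
      (if π.dec z = !b then 1 else 0)

/-- Probability (given `Θ = b`) that the relay receives the prefix `ypre` in the
first `k` time steps. -/
def prefixProb {Y Z : Type*} [Fintype Y] {n : ℕ} (P : Bool → Y → ℝ)
    (π : DetProtocol Y Z n) (b : Bool) {k : ℕ} (hk : k ≤ n) (ypre : Fin k → Y) : ℝ :=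
  ∏ i : Fin k, P (π.x b (Fin.castLE hk i)) (ypre i)

/-- `errGiven P Q π b hk ypre` is the conditional error probability `p_{e,b}(y_{1…k})`:
the probability that `Θ̂ = ¬b` given `Θ = b` and that the relay receives `ypre` in the
first `k` time steps. -/
def errGiven {Y Z : Type*} [Fintype Y] [Fintype Z] {n : ℕ}
    (P : Bool → Y → ℝ) (Q : Bool → Z → ℝ) (π : DetProtocol Y Z n) (b : Bool)
    {k : ℕ} (hk : k ≤ n) (ypre : Fin k → Y) : ℝ :=
  (∑ y : Fin n → Y, ∑ z : Fin n → Z,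
      Set.indicator {y' : Fin n → Y | ∀ i : Fin k, y' (Fin.castLE hk i) = ypre i}
          (fun _ => (1 : ℝ)) y *
        prodDist P (π.x b) y * prodDist Q (π.W y) z *
        (if π.dec z = !b then 1 else 0)) /
    prefixProb P π b hk ypre

/-- The first `k` relay transmissions `w⃗(y_{1…k})`, determined by the first `k`
received symbols. -/
def relayPrefix {Y Z : Type*} {n : ℕ} (π : DetProtocol Y Z n) {k : ℕ} (hk : k ≤ n)
    (ypre : Fin k → Y) (i : Fin k) : Bool :=
  π.relay (Fin.castLE hk i) (fun j => ypre (Fin.castLE i.isLt.le j))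

/-- Probability that the decoder outputs `b` when the relay input string is `w`. -/
def decProb {Z : Type*} [Fintype Z] {n : ℕ} (Q : Bool → Z → ℝ)
    (dec : (Fin n → Z) → Bool) (b : Bool) (w : Fin n → Bool) : ℝ :=
  ∑ z : Fin n → Z, prodDist Q w z * (if dec z = b then 1 else 0)

/-- `w` extends the relay's first `k` transmissions (after receiving `ypre`) to length `n`,
minimizing the probability that the decoder outputs `b`, i.e. `w = w⃗_{1-b}(y_{1…k})`. -/
def IsBestExtension {Y Z : Type*} [Fintype Z] {n : ℕ} (Q : Bool → Z → ℝ)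
    (π : DetProtocol Y Z n) (b : Bool) {k : ℕ} (hk : k ≤ n) (ypre : Fin k → Y)
    (w : Fin n → Bool) : Prop :=
  (∀ i : Fin k, w (Fin.castLE hk i) = relayPrefix π hk ypre i) ∧
    ∀ w' : Fin n → Bool,
      (∀ i : Fin k, w' (Fin.castLE hk i) = relayPrefix π hk ypre i) →
        decProb Q π.dec b w ≤ decProb Q π.dec b w'

/-- A randomized `n`-step 2-hop protocol: a finite collection of deterministic
protocols together with a probability distribution (the shared private randomness). -/
structure RandProtocol (Y Z : Type*) (n : ℕ) where
  m : ℕ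
  ρ : Fin m → ℝ
  det : Fin m → DetProtocol Y Z n

/-- Validity of the randomness distribution of a randomized protocol. -/
def RandProtocol.Valid {Y Z : Type*} {n : ℕ} (π : RandProtocol Y Z n) : Prop :=
  (∀ r, 0 ≤ π.ρ r) ∧ ∑ r, π.ρ r = 1

/-- Overall error probability `ℙ(Θ̂ ≠ Θ)` of a randomized protocol, with `Θ` uniform. -/
def randPe {Y Z : Type*} [Fintype Y] [Fintype Z] {n : ℕ}
    (P : Bool → Y → ℝ) (Q : Bool → Z → ℝ) (π : RandProtocol Y Z n) : ℝ :=
  ∑ r, π.ρ r * ((errProb P Q (π.det r) false + errProb P Q (π.det r) true) / 2)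

/-- The 2-hop error exponent `E(P,Q)`: the supremum, over sequences of (randomized)
protocols, of the liminf of `-(1/n) log P_e(n,P,Q)`. -/
def twoHopExponent {Y Z : Type*} [Fintype Y] [Fintype Z]
    (P : Bool → Y → ℝ) (Q : Bool → Z → ℝ) : ℝ :=
  sSup { E | ∃ π : (n : ℕ) → RandProtocol Y Z n, (∀ n, (π n).Valid) ∧
    E = Filter.liminf (fun n : ℕ => -(1 / (n : ℝ)) * Real.log (randPe P Q (π n)))
          Filter.atTop }

/-- `m` is the unique global maximizer of `g` on `[0,1]`. -/
def UniqueArgmax (g : ℝ → ℝ) (m : ℝ) : Prop :=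
  m ∈ Set.Icc (0 : ℝ) 1 ∧ ∀ s ∈ Set.Icc (0 : ℝ) 1, s ≠ m → g s < g m

/-- `g` is skewed with respect to `s*`. -/
def SkewedFun (sStar : ℝ) (g : ℝ → ℝ) : Prop :=
  ∃ m, UniqueArgmax g m ∧ (m < sStar ∨ 1 - sStar < m)

/-- `g` is balanced with respect to `s*`. -/
def BalancedFun (sStar : ℝ) (g : ℝ → ℝ) : Prop :=
  ∃ m, UniqueArgmax g m ∧ sStar < m ∧ m < 1 - sStar

/-- `g` is neutral with respect to `s*`. -/
def NeutralFun (sStar : ℝ) (g : ℝ → ℝ) : Prop :=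
  ∃ m, UniqueArgmax g m ∧ (m = sStar ∨ m = 1 - sStar)

/-- `g` and `h` are of strictly opposite type w.r.t. `s*`. -/
def StrictlyOppositeType (sStar : ℝ) (g h : ℝ → ℝ) : Prop :=
  (SkewedFun sStar g ∧ BalancedFun sStar h) ∨ (BalancedFun sStar g ∧ SkewedFun sStar h)

/-- `g` and `h` are of weakly opposite type w.r.t. `s*`. -/
def WeaklyOppositeType (sStar : ℝ) (g h : ℝ → ℝ) : Prop :=
  ((SkewedFun sStar g ∨ NeutralFun sStar g) ∧ (BalancedFun sStar h ∨ NeutralFun sStar h)) ∨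
    ((BalancedFun sStar g ∨ NeutralFun sStar g) ∧ (SkewedFun sStar h ∨ NeutralFun sStar h))

/-- `g` is non-constant on `[0,1]`. -/
def NonConstantOn (g : ℝ → ℝ) : Prop :=
  ∃ s₁ ∈ Set.Icc (0 : ℝ) 1, ∃ s₂ ∈ Set.Icc (0 : ℝ) 1, g s₁ ≠ g s₂

/-- The quantity `E_s` from the paper. -/
def Efun {Y Z : Type*} [Fintype Y] [Fintype Z]
    (P : Bool → Y → ℝ) (Q : Bool → Z → ℝ) (s : ℝ) : ℝ :=
  min (max (dC (P false) (P true) s) (dC (P false) (P true) (1 - s)))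
      (max (dC (Q false) (Q true) s) (dC (Q false) (Q true) (1 - s)))


namespace DCPAux

open Real Set

variable {α : Type*} [Fintype α]

open scoped Classical in
/-- Common support of `p` and `q` as a finset. -/
noncomputable def supp (p q : α → ℝ) : Finset α :=
  Finset.filter (fun x => p x ≠ 0 ∧ q x ≠ 0) Finset.univ

lemma mem_supp {p q : α → ℝ} {x : α} : x ∈ supp p q ↔ p x ≠ 0 ∧ q x ≠ 0 := by
  classical simp [supp]

/-- Exponent coefficient. -/
noncomputable def cc (p q : α → ℝ) (x : α) : ℝ := Real.log (q x) - Real.log (p x)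

/-- The Chernoff sum rewritten as a sum of exponentials. -/
noncomputable def FF (p q : α → ℝ) (s : ℝ) : ℝ :=
  ∑ x ∈ supp p q, p x * Real.exp (s * cc p q x)

noncomputable def FF1 (p q : α → ℝ) (s : ℝ) : ℝ :=
  ∑ x ∈ supp p q, p x * (Real.exp (s * cc p q x) * cc p q x)

noncomputable def FF2 (p q : α → ℝ) (s : ℝ) : ℝ :=
  ∑ x ∈ supp p q, p x * (Real.exp (s * cc p q x) * cc p q x * cc p q x)

variable {p q : α → ℝ}

section basic

variable (hp : ∀ x, 0 ≤ p x) (hq : ∀ x, 0 ≤ q x) (hsupp : CommonSupport p q)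
include hp hq

lemma cherSum_eq_FF (s : ℝ) : cherSum p q s = FF p q s := by
  classical
  unfold cherSum FF supp
  rw [Finset.sum_filter]
  refine Finset.sum_congr rfl fun x _ => ?_
  by_cases h : p x = 0 ∨ q x = 0
  · rw [if_pos h, if_neg (by tauto)]
  · have h' : p x ≠ 0 ∧ q x ≠ 0 := by tauto
    rw [if_neg h, if_pos h']
    have hp' : 0 < p x := lt_of_le_of_ne (hp x) (Ne.symm h'.1)
    have hq' : 0 < q x := lt_of_le_of_ne (hq x) (Ne.symm h'.2)
    have hr : p x * Real.exp (s * cc p q x)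
        = Real.exp (Real.log (p x) + s * (Real.log (q x) - Real.log (p x))) := by
      rw [cc, Real.exp_add, Real.exp_log hp']
    rw [Real.rpow_def_of_pos hp', Real.rpow_def_of_pos hq', ← Real.exp_add, hr]
    congr 1
    ring

include hsupp

lemma supp_nonempty : (supp p q).Nonempty := by
  obtain ⟨x, hx1, hx2⟩ := hsupp
  exact ⟨x, mem_supp.2 ⟨hx1, hx2⟩⟩

lemma FF_pos (s : ℝ) : 0 < FF p q s := by
  refine Finset.sum_pos (fun x hx => ?_) (supp_nonempty hp hq hsupp)
  exact mul_pos (lt_of_le_of_ne (hp x) (Ne.symm (mem_supp.1 hx).1)) (Real.exp_pos _)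

end basic

lemma hasDerivAt_FF (s : ℝ) : HasDerivAt (FF p q) (FF1 p q s) s := by
  unfold FF FF1
  exact HasDerivAt.fun_sum fun x _ => ((hasDerivAt_mul_const (cc p q x)).exp.const_mul (p x))

lemma hasDerivAt_FF1 (s : ℝ) : HasDerivAt (FF1 p q) (FF2 p q s) s := by
  unfold FF1 FF2
  exact HasDerivAt.fun_sum fun x _ =>
    (((hasDerivAt_mul_const (cc p q x)).exp.mul_const (cc p q x)).const_mul (p x))

lemma FF_cauchySchwarz (hp : ∀ x, 0 ≤ p x) (s : ℝ) :
    FF1 p q s ^ 2 ≤ FF p q s * FF2 p q s := by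
  unfold FF FF1 FF2
  refine Finset.sum_sq_le_sum_mul_sum_of_sq_eq_mul _ (fun x _ => ?_) (fun x _ => ?_)
    (fun x _ => by ring)
  · exact mul_nonneg (hp x) (Real.exp_pos _).le
  · have h : p x * (Real.exp (s * cc p q x) * cc p q x * cc p q x)
        = p x * Real.exp (s * cc p q x) * cc p q x ^ 2 := by ring
    rw [h]
    exact mul_nonneg (mul_nonneg (hp x) (Real.exp_pos _).le) (sq_nonneg _)

section dc

variable (hp : ∀ x, 0 ≤ p x) (hq : ∀ x, 0 ≤ q x) (hsupp : CommonSupport p q)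
include hp hq hsupp

lemma dC_eq_FF : dC p q = fun s => - Real.log (FF p q s) := by
  funext s; rw [dC, cherSum_eq_FF hp hq]

lemma hasDerivAt_dC (s : ℝ) :
    HasDerivAt (dC p q) (-(FF1 p q s / FF p q s)) s := by
  rw [dC_eq_FF hp hq hsupp]
  exact ((hasDerivAt_FF s).log (FF_pos hp hq hsupp s).ne').neg

lemma deriv_dC : deriv (dC p q) = fun s => -(FF1 p q s / FF p q s) :=
  funext fun s => (hasDerivAt_dC hp hq hsupp s).deriv

lemma hasDerivAt_deriv_dC (s : ℝ) :
    HasDerivAt (deriv (dC p q))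
      (-((FF2 p q s * FF p q s - FF1 p q s * FF1 p q s) / FF p q s ^ 2)) s := by
  rw [deriv_dC hp hq hsupp]
  exact ((hasDerivAt_FF1 s).div (hasDerivAt_FF s) (FF_pos hp hq hsupp s).ne').neg

lemma continuous_dC : Continuous (dC p q) :=
  continuous_iff_continuousAt.2 fun s =>
    (hasDerivAt_dC hp hq hsupp s).differentiableAt.continuousAt

lemma concaveOn_dC : ConcaveOn ℝ (Set.Icc (0:ℝ) 1) (dC p q) := by
  have huniv : ConcaveOn ℝ (Set.univ : Set ℝ) (dC p q) := by
    refine concaveOn_of_deriv2_nonpos' convex_univ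
      (fun x _ => (hasDerivAt_dC hp hq hsupp x).differentiableAt.differentiableWithinAt)
      (fun x _ => (hasDerivAt_deriv_dC hp hq hsupp x).differentiableAt.differentiableWithinAt)
      (fun x _ => ?_)
    show deriv (deriv (dC p q)) x ≤ 0
    rw [(hasDerivAt_deriv_dC hp hq hsupp x).deriv]
    have hcs := FF_cauchySchwarz (q := q) hp x
    have hF2 : (0:ℝ) < FF p q x ^ 2 := pow_pos (FF_pos hp hq hsupp x) 2
    rw [neg_nonpos]
    apply div_nonneg _ hF2.le
    nlinarith [hcs]
  exact huniv.subset (Set.subset_univ _) (convex_Icc _ _)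

lemma uniqueArgmax_dC (hnc : NonConstantOn (dC p q)) :
    ∃ m, UniqueArgmax (dC p q) m := by
  obtain ⟨m, hm, hmax⟩ := isCompact_Icc.exists_isMaxOn (s := Set.Icc (0:ℝ) 1)
    ⟨0, by norm_num⟩ ((continuous_dC hp hq hsupp).continuousOn)
  rw [isMaxOn_iff] at hmax
  refine ⟨m, hm, fun s hs hne => ?_⟩
  by_contra hlt
  have heq : dC p q s = dC p q m := le_antisymm (hmax s hs) (not_lt.1 hlt)
  -- a common lemma: two distinct points where the max is attained give a contradiction
  have key : ∀ u v : ℝ, u ∈ Set.Icc (0:ℝ) 1 → v ∈ Set.Icc (0:ℝ) 1 → u < v →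
      dC p q u = dC p q m → dC p q v = dC p q m → False := by
    intro u v hu hv huv hfu hfv
    have hconc := concaveOn_dC hp hq hsupp
    -- dC is constant on [u,v]
    have hconst : ∀ t ∈ Set.Icc u v, dC p q t = dC p q m := by
      intro t ht
      have ht01 : t ∈ Set.Icc (0:ℝ) 1 :=
        ⟨le_trans hu.1 ht.1, le_trans ht.2 hv.2⟩
      refine le_antisymm (hmax t ht01) ?_
      have hvu : (0:ℝ) < v - u := by linarith
      set a := (v - t) / (v - u) with ha
      set b := (t - u) / (v - u) with hb
      have ha0 : 0 ≤ a := div_nonneg (by linarith [ht.2]) hvu.le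
      have hb0 : 0 ≤ b := div_nonneg (by linarith [ht.1]) hvu.le
      have hab : a + b = 1 := by
        rw [ha, hb, ← add_div, div_eq_iff hvu.ne']; ring
      have hcomb : a • u + b • v = t := by
        rw [smul_eq_mul, smul_eq_mul, ha, hb, div_mul_eq_mul_div, div_mul_eq_mul_div,
          ← add_div, div_eq_iff hvu.ne']; ring
      have := hconc.2 hu hv ha0 hb0 hab
      rw [hcomb] at this
      calc dC p q m = a * dC p q m + b * dC p q m := by rw [← add_mul, hab, one_mul]
        _ = a * dC p q u + b * dC p q v := by rw [hfu, hfv]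
        _ = a • dC p q u + b • dC p q v := by simp [smul_eq_mul]
        _ ≤ dC p q t := this
    -- hence FF is constant on [u,v]
    have hFFconst : ∀ t ∈ Set.Icc u v, FF p q t = FF p q m := by
      intro t ht
      have h1 : -Real.log (FF p q t) = -Real.log (FF p q m) := by
        have e := hconst t ht
        rwa [dC_eq_FF hp hq hsupp] at e
      have h2 : Real.log (FF p q t) = Real.log (FF p q m) := by linarith
      calc FF p q t = Real.exp (Real.log (FF p q t)) :=
            (Real.exp_log (FF_pos hp hq hsupp t)).symm
        _ = Real.exp (Real.log (FF p q m)) := by rw [h2]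
        _ = FF p q m := Real.exp_log (FF_pos hp hq hsupp m)
    -- so FF1 vanishes on (u,v)
    have hFF1zero : ∀ w ∈ Set.Ioo u v, FF1 p q w = 0 := by
      intro w hw
      have hEv : FF p q =ᶠ[nhds w] fun _ => FF p q m :=
        Filter.eventuallyEq_of_mem (Ioo_mem_nhds hw.1 hw.2)
          (fun t ht => hFFconst t (Set.Ioo_subset_Icc_self ht))
      have h0 : HasDerivAt (FF p q) 0 w :=
        (hasDerivAt_const w (FF p q m)).congr_of_eventuallyEq hEv
      exact (hasDerivAt_FF w).unique h0
    -- so FF2 vanishes at the midpoint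
    set t0 := (u + v) / 2 with ht0def
    have ht0 : t0 ∈ Set.Ioo u v := ⟨by rw [ht0def]; linarith, by rw [ht0def]; linarith⟩
    have hFF2zero : FF2 p q t0 = 0 := by
      have hEv : FF1 p q =ᶠ[nhds t0] fun _ => (0:ℝ) :=
        Filter.eventuallyEq_of_mem (Ioo_mem_nhds ht0.1 ht0.2) (fun w hw => hFF1zero w hw)
      have h0 : HasDerivAt (FF1 p q) 0 t0 :=
        (hasDerivAt_const t0 (0:ℝ)).congr_of_eventuallyEq hEv
      exact (hasDerivAt_FF1 t0).unique h0
    -- hence all exponents vanish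
    have hcc : ∀ x ∈ supp p q, cc p q x = 0 := by
      intro x hx
      have hterm := (Finset.sum_eq_zero_iff_of_nonneg (fun x _ => ?_)).1 hFF2zero x hx
      · by_contra hc
        have hpx : 0 < p x := lt_of_le_of_ne (hp x) (Ne.symm (mem_supp.1 hx).1)
        have hrw : p x * (Real.exp (t0 * cc p q x) * cc p q x * cc p q x)
            = (p x * Real.exp (t0 * cc p q x)) * (cc p q x * cc p q x) := by ring
        rw [hrw] at hterm
        exact (mul_pos (mul_pos hpx (Real.exp_pos _)) (mul_self_pos.2 hc)).ne' hterm
      · have h : p x * (Real.exp (t0 * cc p q x) * cc p q x * cc p q x)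
            = p x * Real.exp (t0 * cc p q x) * cc p q x ^ 2 := by ring
        rw [h]
        exact mul_nonneg (mul_nonneg (hp x) (Real.exp_pos _).le) (sq_nonneg _)
    -- hence dC is constant, contradicting non-constancy
    obtain ⟨s1, hs1, s2, hs2, hne12⟩ := hnc
    have hFFc : ∀ r : ℝ, FF p q r = FF p q 0 := by
      intro r
      unfold FF
      exact Finset.sum_congr rfl fun x hx => by rw [hcc x hx]; simp
    apply hne12
    show dC p q s1 = dC p q s2
    rw [dC_eq_FF hp hq hsupp]
    simp only [hFFc s1, hFFc s2]
  rcases hne.lt_or_gt with h | h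
  · exact key s m hs hm h heq rfl
  · exact key m s hm hs h rfl heq

end dc

/-- Strict monotonicity towards the unique argmax, from concavity. -/
lemma mono_of_concave {g : ℝ → ℝ} {m : ℝ}
    (hc : ConcaveOn ℝ (Set.Icc (0:ℝ) 1) g) (hu : UniqueArgmax g m) :
    (∀ s t : ℝ, 0 ≤ s → s < t → t ≤ m → g s < g t) ∧
      (∀ s t : ℝ, m ≤ s → s < t → t ≤ 1 → g t < g s) := by
  obtain ⟨hm, hmax⟩ := hu
  constructor
  · intro s t hs0 hst htm
    have hs01 : s ∈ Set.Icc (0:ℝ) 1 := ⟨hs0, by linarith [hm.2]⟩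
    have hsm : g s < g m := hmax s hs01 (by intro h; rw [h] at hst; linarith)
    rcases eq_or_lt_of_le htm with h | h
    · rwa [h]
    · have hms : (0:ℝ) < m - s := by linarith
      set a := (m - t) / (m - s) with ha
      set b := (t - s) / (m - s) with hb
      have ha0 : 0 ≤ a := div_nonneg (by linarith) hms.le
      have hb0 : 0 < b := div_pos (by linarith) hms
      have hab : a + b = 1 := by
        rw [ha, hb, ← add_div, div_eq_iff hms.ne']; ring
      have hcomb : a • s + b • m = t := by
        rw [smul_eq_mul, smul_eq_mul, ha, hb, div_mul_eq_mul_div, div_mul_eq_mul_div,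
          ← add_div, div_eq_iff hms.ne']; ring
      have h2 := hc.2 hs01 hm ha0 hb0.le hab
      rw [hcomb] at h2
      calc g s = a * g s + b * g s := by rw [← add_mul, hab, one_mul]
        _ < a * g s + b * g m := by nlinarith
        _ = a • g s + b • g m := by simp [smul_eq_mul]
        _ ≤ g t := h2
  · intro s t hms hst ht1
    have ht01 : t ∈ Set.Icc (0:ℝ) 1 := ⟨by linarith [hm.1], ht1⟩
    have htm : g t < g m := hmax t ht01 (by intro h; rw [h] at hst; linarith)
    rcases eq_or_lt_of_le hms with h | h
    · rwa [← h]
    · have htmm : (0:ℝ) < t - m := by linarith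
      set a := (t - s) / (t - m) with ha
      set b := (s - m) / (t - m) with hb
      have ha0 : 0 < a := div_pos (by linarith) htmm
      have hb0 : 0 ≤ b := div_nonneg (by linarith) htmm.le
      have hab : a + b = 1 := by
        rw [ha, hb, ← add_div, div_eq_iff htmm.ne']; ring
      have hcomb : a • m + b • t = s := by
        rw [smul_eq_mul, smul_eq_mul, ha, hb, div_mul_eq_mul_div, div_mul_eq_mul_div,
          ← add_div, div_eq_iff htmm.ne']; ring
      have h2 := hc.2 hm ht01 ha0.le hb0 hab
      rw [hcomb] at h2
      calc g t = a * g t + b * g t := by rw [← add_mul, hab, one_mul]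
        _ < a * g m + b * g t := by nlinarith
        _ = a • g m + b • g t := by simp [smul_eq_mul]
        _ ≤ g s := h2

/-- Packaged facts about `dC`. -/
lemma dC_package (p q : α → ℝ) (hp : ∀ x, 0 ≤ p x) (hq : ∀ x, 0 ≤ q x)
    (hsupp : CommonSupport p q) (hnc : NonConstantOn (dC p q)) :
    ∃ m, UniqueArgmax (dC p q) m ∧
      (∀ s t : ℝ, 0 ≤ s → s < t → t ≤ m → dC p q s < dC p q t) ∧
      (∀ s t : ℝ, m ≤ s → s < t → t ≤ 1 → dC p q t < dC p q s) ∧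
      Continuous (dC p q) := by
  obtain ⟨m, hm⟩ := uniqueArgmax_dC hp hq hsupp hnc
  obtain ⟨h1, h2⟩ := mono_of_concave (concaveOn_dC hp hq hsupp) hm
  exact ⟨m, hm, h1, h2, continuous_dC hp hq hsupp⟩

/-- Auxiliary step: if `g s* < h s*` and `g s* < g m_g`, then `s*` is not a maximizer. -/
lemma step1_aux {g h : ℝ → ℝ} {mg sStar : ℝ}
    (hgU : UniqueArgmax g mg)
    (hgup : ∀ s t : ℝ, 0 ≤ s → s < t → t ≤ mg → g s < g t)
    (hgdown : ∀ s t : ℝ, mg ≤ s → s < t → t ≤ 1 → g t < g s)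
    (hhcont : Continuous h) (hs0 : 0 ≤ sStar) (hs1 : sStar ≤ 1)
    (key : ∀ t ∈ Set.Icc (0:ℝ) 1, min (g t) (h t) ≤ g sStar)
    (hglt : g sStar < h sStar) (hgm : g sStar < g mg) : False := by
  obtain ⟨δ, hδ, hball⟩ :=
    Metric.continuousAt_iff.1 hhcont.continuousAt (h sStar - g sStar) (by linarith)
  have hmg0 : 0 ≤ mg := hgU.1.1
  have hmg1 : mg ≤ 1 := hgU.1.2
  rcases lt_trichotomy mg sStar with hc | hc | hc
  · -- move left
    set t := max (sStar - δ/2) mg with htdef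
    have hts : t < sStar := max_lt (by linarith) hc
    have ht01 : t ∈ Set.Icc (0:ℝ) 1 := ⟨le_trans hmg0 (le_max_right _ _), by linarith⟩
    have hgt : g sStar < g t := hgdown t sStar (le_max_right _ _) hts hs1
    have hht : g sStar < h t := by
      have hd : dist t sStar < δ := by
        rw [Real.dist_eq, abs_of_neg (by linarith : t - sStar < 0)]
        have := le_max_left (sStar - δ/2) mg
        simp only [htdef]
        linarith
      have := hball hd
      rw [Real.dist_eq, abs_lt] at this
      linarith [this.1]
    have := key t ht01
    have h2 : g sStar < min (g t) (h t) := lt_min hgt hht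
    exact absurd this (not_le.2 h2)
  · rw [hc] at hgm; exact lt_irrefl _ hgm
  · -- move right
    set t := min (sStar + δ/2) mg with htdef
    have hts : sStar < t := lt_min (by linarith) hc
    have ht01 : t ∈ Set.Icc (0:ℝ) 1 := ⟨by linarith, le_trans (min_le_right _ _) hmg1⟩
    have hgt : g sStar < g t := hgup sStar t hs0 hts (min_le_right _ _)
    have hht : g sStar < h t := by
      have hd : dist t sStar < δ := by
        rw [Real.dist_eq, abs_of_pos (by linarith : (0:ℝ) < t - sStar)]
        have := min_le_left (sStar + δ/2) mg
        simp only [htdef]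
        linarith
      have := hball hd
      rw [Real.dist_eq, abs_lt] at this
      linarith [this.1]
    have := key t ht01
    have h2 : g sStar < min (g t) (h t) := lt_min hgt hht
    exact absurd this (not_le.2 h2)

/-- The mixed case: `m_g < s* < m_h` forces `g` skewed and `h` balanced. -/
lemma mixed_case {g h : ℝ → ℝ} {mg mh sStar EStar : ℝ}
    (hgU : UniqueArgmax g mg) (hhU : UniqueArgmax h mh)
    (hgdown : ∀ s t : ℝ, mg ≤ s → s < t → t ≤ 1 → g t < g s)
    (hhup : ∀ s t : ℝ, 0 ≤ s → s < t → t ≤ mh → h s < h t)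
    (hs0 : 0 ≤ sStar) (hs12 : sStar ≤ 1/2)
    (keyB : ∀ t ∈ Set.Icc (0:ℝ) 1, min (g t) (h (1 - t)) ≤ EStar)
    (hEg : EStar = g sStar) (hEh : EStar = h sStar)
    (hhord : h (1 - sStar) ≤ h sStar)
    (hmg : mg < sStar) (hmh : sStar < mh) :
    SkewedFun sStar g ∧ BalancedFun sStar h := by
  have hmh1 : mh ≤ 1 := hhU.1.2
  have hmg0 : 0 ≤ mg := hgU.1.1
  -- mh ≠ 1 - sStar
  have hne : mh ≠ 1 - sStar := by
    intro he
    have hs01 : sStar ∈ Set.Icc (0:ℝ) 1 := ⟨hs0, by linarith⟩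
    have h1 : h sStar < h mh := hhU.2 sStar hs01 (by linarith)
    rw [he] at h1
    linarith
  rcases lt_or_gt_of_ne hne with hlt | hgt
  · exact ⟨⟨mg, hgU, Or.inl hmg⟩, ⟨mh, hhU, hmh, hlt⟩⟩
  · exfalso
    rcases eq_or_lt_of_le hs12 with he12 | hlt12
    · -- sStar = 1/2 : use the reflected bound
      set t := max mg (1 - mh) with htdef
      have hts : t < sStar := max_lt hmg (by linarith)
      have ht01 : t ∈ Set.Icc (0:ℝ) 1 := ⟨le_trans hmg0 (le_max_left _ _), by linarith⟩
      have hgt : EStar < g t := by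
        rw [hEg]; exact hgdown t sStar (le_max_left _ _) hts (by linarith)
      have hht : EStar < h (1 - t) := by
        have h1s : (1:ℝ) - sStar = sStar := by rw [he12]; norm_num
        have hup := hhup sStar (1 - t) hs0 (by linarith) (by
          have := le_max_right mg (1 - mh)
          simp only [htdef] at *
          linarith)
        rw [hEh]; exact hup
      have := keyB t ht01
      exact absurd this (not_le.2 (lt_min hgt hht))
    · -- sStar < 1/2 : contradiction with the ordering hypothesis on h
      have := hhup sStar (1 - sStar) hs0 (by linarith) (by linarith)
      linarith

/-- Main combinatorial lemma. -/
lemma main_aux {g h : ℝ → ℝ} {mg mh sStar EStar : ℝ}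
    (hgU : UniqueArgmax g mg)
    (hgup : ∀ s t : ℝ, 0 ≤ s → s < t → t ≤ mg → g s < g t)
    (hgdown : ∀ s t : ℝ, mg ≤ s → s < t → t ≤ 1 → g t < g s)
    (hgcont : Continuous g)
    (hhU : UniqueArgmax h mh)
    (hhup : ∀ s t : ℝ, 0 ≤ s → s < t → t ≤ mh → h s < h t)
    (hhdown : ∀ s t : ℝ, mh ≤ s → s < t → t ≤ 1 → h t < h s)
    (hhcont : Continuous h)
    (hs0 : 0 ≤ sStar) (hs12 : sStar ≤ 1/2)
    (keyA : ∀ t ∈ Set.Icc (0:ℝ) 1, min (g t) (h t) ≤ EStar)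
    (keyB : ∀ t ∈ Set.Icc (0:ℝ) 1, min (g t) (h (1 - t)) ≤ EStar)
    (keyC : ∀ t ∈ Set.Icc (0:ℝ) 1, min (h t) (g (1 - t)) ≤ EStar)
    (hEeq : EStar = min (g sStar) (h sStar))
    (hgord : g (1 - sStar) ≤ g sStar) (hhord : h (1 - sStar) ≤ h sStar)
    (hne1 : EStar ≠ g mg) (hne2 : EStar ≠ h mh) :
    EStar = g sStar ∧ EStar = h sStar ∧ sStar ≠ 0 ∧
      ((SkewedFun sStar g ∧ BalancedFun sStar h) ∨
        (BalancedFun sStar g ∧ SkewedFun sStar h)) := by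
  have hs1 : sStar ≤ 1 := by linarith
  have hs01 : sStar ∈ Set.Icc (0:ℝ) 1 := ⟨hs0, hs1⟩
  -- g sStar = h sStar
  have hgh : g sStar = h sStar := by
    rcases lt_trichotomy (g sStar) (h sStar) with hc | hc | hc
    · exfalso
      have hEg : EStar = g sStar := by rw [hEeq, min_eq_left hc.le]
      have hgm : g sStar < g mg := by
        rcases eq_or_ne sStar mg with he | hne
        · exact absurd (hEg.trans (by rw [he])) hne1
        · exact hgU.2 sStar hs01 hne
      exact step1_aux hgU hgup hgdown hhcont hs0 hs1
        (fun t ht => by rw [← hEg]; exact keyA t ht) hc hgm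
    · exact hc
    · exfalso
      have hEh : EStar = h sStar := by rw [hEeq, min_eq_right hc.le]
      have hhm : h sStar < h mh := by
        rcases eq_or_ne sStar mh with he | hne
        · exact absurd (hEh.trans (by rw [he])) hne2
        · exact hhU.2 sStar hs01 hne
      exact step1_aux hhU hhup hhdown hgcont hs0 hs1
        (fun t ht => by rw [← hEh, min_comm]; exact keyA t ht) hc hhm
  have hEg : EStar = g sStar := by rw [hEeq, min_eq_left hgh.le]
  have hEh : EStar = h sStar := by rw [hEeq, hgh, min_self]
  -- mg ≠ sStar, mh ≠ sStar
  have hmgne : mg ≠ sStar := fun he => hne1 (by rw [hEg, he])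
  have hmhne : mh ≠ sStar := fun he => hne2 (by rw [hEh, he])
  rcases lt_or_gt_of_ne hmgne with hmg | hmg <;> rcases lt_or_gt_of_ne hmhne with hmh | hmh
  · -- both left: contradiction
    exfalso
    set t := max mg mh with htdef
    have hts : t < sStar := max_lt hmg hmh
    have ht01 : t ∈ Set.Icc (0:ℝ) 1 := ⟨le_trans hgU.1.1 (le_max_left _ _), by linarith⟩
    have hgt : EStar < g t := by
      rw [hEg]; exact hgdown t sStar (le_max_left _ _) hts hs1
    have hht : EStar < h t := by
      rw [hEh]; exact hhdown t sStar (le_max_right _ _) hts hs1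
    exact absurd (keyA t ht01) (not_le.2 (lt_min hgt hht))
  · -- mg < sStar < mh : g skewed, h balanced
    have hmix := mixed_case hgU hhU hgdown hhup hs0 hs12 keyB hEg hEh hhord hmg hmh
    exact ⟨hEg, hEh, by intro h0; rw [h0] at hmg; linarith [hgU.1.1], Or.inl hmix⟩
  · -- mh < sStar < mg : h skewed, g balanced
    have hmix := mixed_case hhU hgU hhdown hgup hs0 hs12 keyC hEh hEg hgord hmh hmg
    exact ⟨hEg, hEh, by intro h0; rw [h0] at hmh; linarith [hhU.1.1], Or.inr ⟨hmix.2, hmix.1⟩⟩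
  · -- both right: contradiction
    exfalso
    set t := min mg mh with htdef
    have hts : sStar < t := lt_min hmg hmh
    have ht01 : t ∈ Set.Icc (0:ℝ) 1 := ⟨by linarith, le_trans (min_le_left _ _) hgU.1.2⟩
    have hgt : EStar < g t := by
      rw [hEg]; exact hgup sStar t hs0 hts (min_le_left _ _)
    have hht : EStar < h t := by
      rw [hEh]; exact hhup sStar t hs0 hts (min_le_right _ _)
    exact absurd (keyA t ht01) (not_le.2 (lt_min hgt hht))

end DCPAux


/-- Lemma 10 of the paper: trichotomy for the optimizing `s*`. -/
theorem dcp_trichotomy {Y Z : Type*} [Fintype Y] [Fintype Z]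
    (P : Bool → Y → ℝ) (Q : Bool → Z → ℝ)
    (hP : IsChannel P) (hQ : IsChannel Q)
    (hPsupp : CommonSupport (P false) (P true))
    (hQsupp : CommonSupport (Q false) (Q true))
    (hPnc : NonConstantOn (fun s => dC (P false) (P true) s))
    (hQnc : NonConstantOn (fun s => dC (Q false) (Q true) s))
    (EStar sStar : ℝ)
    (hsStar : sStar ∈ Set.Icc (0 : ℝ) (1 / 2))
    (hmax : ∀ s ∈ Set.Icc (0 : ℝ) 1, Efun P Q s ≤ Efun P Q sStar)
    (hEStar : EStar = Efun P Q sStar)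
    (hPord : dC (P false) (P true) (1 - sStar) ≤ dC (P false) (P true) sStar)
    (hQord : dC (Q false) (Q true) (1 - sStar) ≤ dC (Q false) (Q true) sStar) :
    EStar = sSup ((fun s : ℝ => dC (P false) (P true) s) '' Set.Icc 0 1) ∨
    EStar = sSup ((fun s : ℝ => dC (Q false) (Q true) s) '' Set.Icc 0 1) ∨
    (EStar = dC (P false) (P true) sStar ∧ EStar = dC (Q false) (Q true) sStar ∧
      sStar ≠ 0 ∧
      StrictlyOppositeType sStar (fun s => dC (P false) (P true) s)
        (fun s => dC (Q false) (Q true) s)) := by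
  -- set up the two functions
  have hp0 : ∀ y, 0 ≤ P false y := (hP false).1
  have hp1 : ∀ y, 0 ≤ P true y := (hP true).1
  have hq0 : ∀ z, 0 ≤ Q false z := (hQ false).1
  have hq1 : ∀ z, 0 ≤ Q true z := (hQ true).1
  obtain ⟨mg, hgU, hgup, hgdown, hgcont⟩ :=
    DCPAux.dC_package (P false) (P true) hp0 hp1 hPsupp hPnc
  obtain ⟨mh, hhU, hhup, hhdown, hhcont⟩ :=
    DCPAux.dC_package (Q false) (Q true) hq0 hq1 hQsupp hQnc
  -- the suprema are the values at the argmax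
  have hSupg : sSup ((fun s : ℝ => dC (P false) (P true) s) '' Set.Icc 0 1)
      = dC (P false) (P true) mg := by
    refine IsGreatest.csSup_eq ⟨⟨mg, hgU.1, rfl⟩, ?_⟩
    rintro y ⟨s, hs, rfl⟩
    rcases eq_or_ne s mg with he | hne
    · rw [he]
    · exact (hgU.2 s hs hne).le
  have hSuph : sSup ((fun s : ℝ => dC (Q false) (Q true) s) '' Set.Icc 0 1)
      = dC (Q false) (Q true) mh := by
    refine IsGreatest.csSup_eq ⟨⟨mh, hhU.1, rfl⟩, ?_⟩
    rintro y ⟨s, hs, rfl⟩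
    rcases eq_or_ne s mh with he | hne
    · rw [he]
    · exact (hhU.2 s hs hne).le
  by_cases hc1 : EStar = dC (P false) (P true) mg
  · exact Or.inl (hc1.trans hSupg.symm)
  by_cases hc2 : EStar = dC (Q false) (Q true) mh
  · exact Or.inr (Or.inl (hc2.trans hSuph.symm))
  refine Or.inr (Or.inr ?_)
  -- the key bounds from maximality
  simp only [Efun] at hmax hEStar
  have keyA : ∀ t ∈ Set.Icc (0:ℝ) 1,
      min (dC (P false) (P true) t) (dC (Q false) (Q true) t) ≤ EStar := by
    intro t ht
    rw [hEStar]
    exact le_trans (min_le_min (le_max_left _ _) (le_max_left _ _)) (hmax t ht)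
  have keyB : ∀ t ∈ Set.Icc (0:ℝ) 1,
      min (dC (P false) (P true) t) (dC (Q false) (Q true) (1 - t)) ≤ EStar := by
    intro t ht
    rw [hEStar]
    exact le_trans (min_le_min (le_max_left _ _) (le_max_right _ _)) (hmax t ht)
  have keyC : ∀ t ∈ Set.Icc (0:ℝ) 1,
      min (dC (Q false) (Q true) t) (dC (P false) (P true) (1 - t)) ≤ EStar := by
    intro t ht
    rw [hEStar, min_comm]
    exact le_trans (min_le_min (le_max_right _ _) (le_max_left _ _)) (hmax t ht)
  have hEeq : EStar
      = min (dC (P false) (P true) sStar) (dC (Q false) (Q true) sStar) := by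
    rw [hEStar, max_eq_left hPord, max_eq_left hQord]
  obtain ⟨h1, h2, h3, h4⟩ := DCPAux.main_aux hgU hgup hgdown hgcont hhU hhup hhdown hhcont
    hsStar.1 hsStar.2 keyA keyB keyC hEeq hPord hQord hc1 hc2
  exact ⟨h1, h2, h3, h4⟩


end
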